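/- Let V be a finite-dimensional complex vector space, let N be a nilpotent linear endomorphism of V, and let T ∈ Col(N). Then for every x ∈ V there exists a linear endomorphism B of V commuting with N such that T x = B x. -/

import Mathlib

open Submodule

open Polynomial

open scoped DirectSum

set_option maxHeartbeats 1000000

/-- A subspace `M` is invariant under the endomorphism `A`. -/
def InvSub {V : Type*} [AddCommGroup V] [Module ℂ V] (A : V →ₗ[ℂ] V)
    (M : Submodule ℂ V) : Prop :=
  M.map A ≤ M

/-- `T ∈ Col(A)`: `T` is bijective and a subspace is `A`-invariant iff its image
under `T` is `A`-invariant. -/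
def Col {V : Type*} [AddCommGroup V] [Module ℂ V] (A T : V →ₗ[ℂ] V) : Prop :=
  Function.Bijective T ∧ ∀ M : Submodule ℂ V, InvSub A M ↔ InvSub A (M.map T)

/-- The cyclic subspace `(A)_x`, i.e. the span of `{A^n x : n ≥ 0}`. -/
def cyc {V : Type*} [AddCommGroup V] [Module ℂ V] (A : V →ₗ[ℂ] V) (x : V) :
    Submodule ℂ V :=
  Submodule.span ℂ (Set.range fun n : ℕ => (A ^ n) x)

section PartI

variable {V : Type*} [AddCommGroup V] [Module ℂ V] [FiniteDimensional ℂ V]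

/-- relative coatoms of the invariant-subspace interval below `W` -/
def MaxBelow (N : V →ₗ[ℂ] V) (W : Submodule ℂ V) : Set (Submodule ℂ V) :=
  {M | InvSub N M ∧ M < W ∧
    ∀ M', InvSub N M' → M ≤ M' → M' ≤ W → M' = M ∨ M' = W}

variable {N T : V →ₗ[ℂ] V}

lemma le_sup_map_pow {M W : Submodule ℂ V} (hW : InvSub N W) (hM : InvSub N M)
    (h : W ≤ M ⊔ W.map N) : ∀ i : ℕ, W ≤ M ⊔ W.map (N ^ i) := by
  intro i
  induction i with
  | zero =>
      have h0 : W.map (N ^ 0) = W := by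
        rw [pow_zero]; ext z; simp [Submodule.mem_map]
      rw [h0]; exact le_sup_right
  | succ i ih =>
      have h2 : W.map N ≤ M ⊔ W.map (N ^ (i + 1)) := by
        calc W.map N ≤ (M ⊔ W.map (N ^ i)).map N := Submodule.map_mono ih
          _ = M.map N ⊔ (W.map (N ^ i)).map N := Submodule.map_sup _ _ _
          _ ≤ M ⊔ W.map (N ^ (i + 1)) := by
              refine sup_le_sup hM ?_
              rw [← Submodule.map_comp, ← Module.End.mul_eq_comp, ← pow_succ']
      exact h.trans (sup_le le_sup_left h2)

lemma mapN_le_of_maxBelow {W M : Submodule ℂ V} {m : ℕ} (hm : N ^ m = 0)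
    (hW : InvSub N W) (hM : M ∈ MaxBelow N W) : W.map N ≤ M := by
  have hMW := hM.2.1
  have hsup : InvSub N (M ⊔ W.map N) := by
    unfold InvSub
    rw [Submodule.map_sup]
    exact sup_le (hM.1.trans le_sup_left) ((Submodule.map_mono hW).trans le_sup_right)
  rcases hM.2.2 (M ⊔ W.map N) hsup le_sup_left (sup_le hMW.le hW) with h | h
  · rw [← h]; exact le_sup_right
  · exfalso
    have h2 := le_sup_map_pow hW hM.1 h.ge m
    rw [hm] at h2
    rw [Submodule.map_zero, sup_bot_eq] at h2
    exact hMW.2 h2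

lemma exists_maxBelow {W : Submodule ℂ V} (hW : InvSub N W) {v : V}
    (hvW : v ∈ W) (hv : v ∉ W.map N) : ∃ M ∈ MaxBelow N W, v ∉ M := by
  set U := W.map N with hU
  have hq : U.mkQ v ≠ 0 := by
    simpa [Submodule.Quotient.mk_eq_zero] using hv
  obtain ⟨φ, hφ⟩ : ∃ φ : Module.Dual ℂ (V ⧸ U), φ (U.mkQ v) ≠ 0 := by
    by_contra hcon
    push_neg at hcon
    exact hq ((Module.forall_dual_apply_eq_zero_iff ℂ _).mp hcon)
  set g : V →ₗ[ℂ] ℂ := φ ∘ₗ U.mkQ with hg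
  have hgN : ∀ w ∈ W, g (N w) = 0 := by
    intro w hw
    have : N w ∈ U := Submodule.mem_map_of_mem hw
    simp only [hg, LinearMap.comp_apply]
    rw [Submodule.mkQ_apply, (Submodule.Quotient.mk_eq_zero U).mpr this, map_zero]
  have hgv : g v ≠ 0 := hφ
  refine ⟨W ⊓ LinearMap.ker g, ⟨?_, ?_, ?_⟩, ?_⟩
  · -- invariant
    intro z hz
    rw [Submodule.mem_map] at hz
    obtain ⟨w, hw, rfl⟩ := hz
    rw [Submodule.mem_inf] at hw
    exact Submodule.mem_inf.mpr ⟨hW (Submodule.mem_map_of_mem hw.1), hgN w hw.1⟩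
  · -- M < W
    refine lt_of_le_of_ne inf_le_left fun heq => ?_
    have hvm : v ∈ W ⊓ LinearMap.ker g := by rw [heq]; exact hvW
    exact hgv (LinearMap.mem_ker.mp (Submodule.mem_inf.mp hvm).2)
  · -- coatom
    intro M' hinv hle hleW
    by_cases hc : M' ≤ LinearMap.ker g
    · exact Or.inl (le_antisymm (le_inf hleW hc) hle)
    · right
      obtain ⟨z, hzM', hgz⟩ := SetLike.not_le_iff_exists.mp hc
      refine le_antisymm hleW fun w hw => ?_
      have h1 : w - (g w / g z) • z ∈ W ⊓ LinearMap.ker g := by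
        refine Submodule.mem_inf.mpr ⟨sub_mem hw (Submodule.smul_mem _ _ (hleW hzM')),
          LinearMap.mem_ker.mpr ?_⟩
        rw [map_sub, map_smul, smul_eq_mul, div_mul_cancel₀ _ hgz, sub_self]
      have h2 : w - (g w / g z) • z ∈ M' := hle h1
      have h3 := Submodule.add_mem M' h2 (Submodule.smul_mem M' (g w / g z) hzM')
      have h4 : w - (g w / g z) • z + (g w / g z) • z = w := by abel
      rwa [h4] at h3
  · intro hvM
    exact hgv (LinearMap.mem_ker.mp (Submodule.mem_inf.mp hvM).2)

lemma sInf_maxBelow {W : Submodule ℂ V} {m : ℕ} (hm : N ^ m = 0)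
    (hW : InvSub N W) (hW0 : W ≠ ⊥) : sInf (MaxBelow N W) = W.map N := by
  have hlt : W.map N < W := by
    refine lt_of_le_of_ne hW fun he => hW0 ?_
    have hbot : InvSub N (⊥ : Submodule ℂ V) := by
      intro z hz; rw [Submodule.map_bot] at hz; exact hz
    have h2 := le_sup_map_pow hW hbot (by rw [he]; exact le_sup_right) m
    rw [hm, Submodule.map_zero] at h2
    exact le_bot_iff.mp (by simpa using h2)
  apply le_antisymm
  · intro v hv
    rw [Submodule.mem_sInf] at hv
    obtain ⟨v₀, hv₀W, hv₀⟩ := SetLike.exists_of_lt hlt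
    obtain ⟨M₀, hM₀, _⟩ := exists_maxBelow hW hv₀W hv₀
    have hvW : v ∈ W := hM₀.2.1.le (hv M₀ hM₀)
    by_contra hvN
    obtain ⟨M₁, hM₁, hvM₁⟩ := exists_maxBelow hW hvW hvN
    exact hvM₁ (hv M₁ hM₁)
  · exact le_sInf fun M hM => mapN_le_of_maxBelow hm hW hM

-- transport lemmas
lemma mapT_le_iff (hT : Col N T) {A B : Submodule ℂ V} : A.map T ≤ B.map T ↔ A ≤ B := by
  constructor
  · intro h a ha
    obtain ⟨b, hb, hba⟩ := h (Submodule.mem_map_of_mem ha)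
    rwa [← hT.1.1 hba]
  · exact Submodule.map_mono

lemma mapT_eq_iff (hT : Col N T) {A B : Submodule ℂ V} : A.map T = B.map T ↔ A = B :=
  ⟨fun h => le_antisymm ((mapT_le_iff hT).mp h.le) ((mapT_le_iff hT).mp h.ge),
   fun h => by rw [h]⟩

lemma mapT_lt_iff (hT : Col N T) {A B : Submodule ℂ V} : A.map T < B.map T ↔ A < B := by
  rw [lt_iff_le_and_ne, lt_iff_le_and_ne, mapT_le_iff hT, ne_eq, mapT_eq_iff hT, ne_eq]

lemma mapT_surj (hT : Col N T) (M' : Submodule ℂ V) :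
    ∃ M : Submodule ℂ V, M.map T = M' :=
  ⟨M'.comap T, Submodule.map_comap_eq_of_surjective hT.1.2 M'⟩

lemma mapT_inf (hT : Col N T) (A B : Submodule ℂ V) :
    (A ⊓ B).map T = A.map T ⊓ B.map T := by
  apply le_antisymm (Submodule.map_inf_le _)
  rintro z ⟨⟨a, ha, hza⟩, ⟨b, hb, hzb⟩⟩
  have : a = b := hT.1.1 (by rw [hza, hzb])
  exact ⟨a, ⟨ha, this ▸ hb⟩, hza⟩

lemma mapT_sInf (hT : Col N T) (S : Set (Submodule ℂ V)) :
    (sInf S).map T = sInf ((fun M => M.map T) '' S) := by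
  apply le_antisymm
  · intro z hz
    rw [Submodule.mem_map] at hz
    obtain ⟨v, hv, rfl⟩ := hz
    rw [Submodule.mem_sInf] at hv
    rw [Submodule.mem_sInf]
    rintro P ⟨M, hM, rfl⟩
    exact Submodule.mem_map_of_mem (hv M hM)
  · intro z hz
    rw [Submodule.mem_sInf] at hz
    obtain ⟨v, rfl⟩ := hT.1.2 z
    refine Submodule.mem_map_of_mem (Submodule.mem_sInf.mpr fun M hM => ?_)
    obtain ⟨w, hw, hwv⟩ := hz (M.map T) ⟨M, hM, rfl⟩
    rwa [← hT.1.1 hwv]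

lemma mapT_sSup (hT : Col N T) (S : Set (Submodule ℂ V)) :
    (sSup S).map T = sSup ((fun M => M.map T) '' S) := by
  rw [sSup_eq_iSup, sSup_image, Submodule.map_iSup]
  refine iSup_congr fun M => ?_
  rw [Submodule.map_iSup]

lemma maxBelow_mapT (hT : Col N T) (W : Submodule ℂ V) :
    MaxBelow N (W.map T) = (fun M : Submodule ℂ V => M.map T) '' MaxBelow N W := by
  ext M'
  constructor
  · intro hM'
    obtain ⟨M, rfl⟩ := mapT_surj hT M'
    refine ⟨M, ⟨(hT.2 M).mpr hM'.1, (mapT_lt_iff hT).mp hM'.2.1, ?_⟩, rfl⟩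
    intro M'' hinv hle hleW
    rcases hM'.2.2 (M''.map T) ((hT.2 M'').mp hinv) ((mapT_le_iff hT).mpr hle)
        ((mapT_le_iff hT).mpr hleW) with h | h
    · exact Or.inl ((mapT_eq_iff hT).mp h)
    · exact Or.inr ((mapT_eq_iff hT).mp h)
  · rintro ⟨M, hM, rfl⟩
    refine ⟨(hT.2 M).mp hM.1, (mapT_lt_iff hT).mpr hM.2.1, ?_⟩
    intro M'' hinv hle hleW
    obtain ⟨M₀, rfl⟩ := mapT_surj hT M''
    rcases hM.2.2 M₀ ((hT.2 M₀).mpr hinv) ((mapT_le_iff hT).mp hle)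
        ((mapT_le_iff hT).mp hleW) with h | h
    · exact Or.inl (h ▸ rfl)
    · exact Or.inr (h ▸ rfl)

lemma mapT_ne_bot (hT : Col N T) {W : Submodule ℂ V} (hW0 : W ≠ ⊥) : W.map T ≠ ⊥ := by
  obtain ⟨w, hw, hw0⟩ := (Submodule.ne_bot_iff W).mp hW0
  refine (Submodule.ne_bot_iff _).mpr ⟨T w, Submodule.mem_map_of_mem hw, fun h => hw0 ?_⟩
  exact hT.1.1 (by rw [h, map_zero])

lemma mapT_mapN {m : ℕ} (hm : N ^ m = 0) (hT : Col N T) {W : Submodule ℂ V}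
    (hW : InvSub N W) : (W.map N).map T = (W.map T).map N := by
  by_cases hW0 : W = ⊥
  · subst hW0; simp
  · rw [← sInf_maxBelow hm hW hW0, ← sInf_maxBelow hm ((hT.2 W).mp hW) (mapT_ne_bot hT hW0),
      mapT_sInf hT, maxBelow_mapT hT]

lemma comm_pow (N : V →ₗ[ℂ] V) (j : ℕ) (u : V) : N ((N ^ j) u) = (N ^ j) (N u) := by
  have h := ((Commute.refl N).pow_right j).eq
  calc N ((N ^ j) u) = (N * N ^ j) u := rfl
    _ = (N ^ j * N) u := by rw [h]
    _ = (N ^ j) (N u) := rfl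

lemma invSub_range_pow (N : V →ₗ[ℂ] V) (j : ℕ) : InvSub N (LinearMap.range (N ^ j)) := by
  intro z hz
  rw [Submodule.mem_map] at hz
  obtain ⟨w, hw, rfl⟩ := hz
  obtain ⟨u, rfl⟩ := hw
  exact ⟨N u, (comm_pow N j u).symm⟩

lemma invSub_ker_pow (N : V →ₗ[ℂ] V) (j : ℕ) : InvSub N (LinearMap.ker (N ^ j)) := by
  intro z hz
  rw [Submodule.mem_map] at hz
  obtain ⟨w, hw, rfl⟩ := hz
  rw [LinearMap.mem_ker] at hw
  rw [LinearMap.mem_ker, ← comm_pow, hw, map_zero]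

lemma mapT_range_pow {m : ℕ} (hm : N ^ m = 0) (hT : Col N T) (j : ℕ) :
    (LinearMap.range (N ^ j)).map T = LinearMap.range (N ^ j) := by
  induction j with
  | zero =>
      rw [pow_zero]
      have h1 : LinearMap.range ((1 : V →ₗ[ℂ] V)) = ⊤ := LinearMap.range_eq_top.mpr fun v => ⟨v, rfl⟩
      rw [h1, Submodule.map_top, LinearMap.range_eq_top.mpr hT.1.2]
  | succ j ih =>
      have h1 : LinearMap.range (N ^ (j + 1)) = (LinearMap.range (N ^ j)).map N := by
        rw [pow_succ', Module.End.mul_eq_comp, LinearMap.range_comp]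
      rw [h1, mapT_mapN hm hT (invSub_range_pow N j), ih]

lemma mapT_comapN {m : ℕ} (hm : N ^ m = 0) (hT : Col N T) {W : Submodule ℂ V}
    (hW : InvSub N W) : (W.comap N).map T = (W.map T).comap N := by
  have hchar : ∀ U : Submodule ℂ V, InvSub N U →
      U.comap N = sSup {M : Submodule ℂ V | InvSub N M ∧ M.map N ≤ U} := by
    intro U hU
    apply le_antisymm
    · apply le_sSup
      refine ⟨?_, Submodule.map_comap_le N U⟩
      exact (Submodule.map_comap_le N U).trans (Submodule.map_le_iff_le_comap.mp hU)
    · exact sSup_le fun M hM => Submodule.map_le_iff_le_comap.mp hM.2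
  rw [hchar W hW, hchar (W.map T) ((hT.2 W).mp hW), mapT_sSup hT]
  congr 1
  ext M'
  constructor
  · rintro ⟨M, ⟨hMinv, hMN⟩, rfl⟩
    refine ⟨(hT.2 M).mp hMinv, ?_⟩
    rw [← mapT_mapN hm hT hMinv]
    exact Submodule.map_mono hMN
  · rintro ⟨hinv, hle⟩
    obtain ⟨M, rfl⟩ := mapT_surj hT M'
    refine ⟨M, ⟨(hT.2 M).mpr hinv, ?_⟩, rfl⟩
    rw [← mapT_mapN hm hT ((hT.2 M).mpr hinv)] at hle
    exact (mapT_le_iff hT).mp hle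

lemma mapT_ker_pow {m : ℕ} (hm : N ^ m = 0) (hT : Col N T) (j : ℕ) :
    (LinearMap.ker (N ^ j)).map T = LinearMap.ker (N ^ j) := by
  induction j with
  | zero =>
      rw [pow_zero]
      have h1 : LinearMap.ker ((1 : V →ₗ[ℂ] V)) = ⊥ := by
        ext v; simp [LinearMap.mem_ker, Module.End.one_apply]
      rw [h1, Submodule.map_bot]
  | succ j ih =>
      have h1 : LinearMap.ker (N ^ (j + 1)) = (LinearMap.ker (N ^ j)).comap N := by
        rw [pow_succ, Module.End.mul_eq_comp, LinearMap.ker_comp]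
      rw [h1, mapT_comapN hm hT (invSub_ker_pow N j), ih]

end PartI

section PartII

variable {V : Type*} [AddCommGroup V] [Module ℂ V] [FiniteDimensional ℂ V]

lemma poly_factor : ∀ (n : ℕ) (p : ℂ[X]), p.natDegree ≤ n → p ≠ 0 →
    ∃ (s : ℕ) (q : ℂ[X]), q.coeff 0 ≠ 0 ∧ p = X ^ s * q := by
  intro n
  induction n with
  | zero =>
      intro p hdeg hp
      refine ⟨0, p, ?_, by ring⟩
      obtain ⟨c, rfl⟩ := Polynomial.natDegree_eq_zero.mp (le_antisymm hdeg (Nat.zero_le _))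
      simpa using fun h => hp (by rw [h, map_zero])
  | succ n ih =>
      intro p hdeg hp
      by_cases h0 : p.coeff 0 ≠ 0
      · exact ⟨0, p, h0, by ring⟩
      · push_neg at h0
        obtain ⟨q, rfl⟩ := Polynomial.X_dvd_iff.mpr h0
        have hq : q ≠ 0 := fun h => hp (by rw [h, mul_zero])
        have hdq : q.natDegree ≤ n := by
          have := Polynomial.natDegree_mul (Polynomial.X_ne_zero (R := ℂ)) hq
          rw [this, Polynomial.natDegree_X] at hdeg
          omega
        obtain ⟨s, q', hq', hfac⟩ := ih q hdq hq
        exact ⟨s + 1, q', hq', by rw [hfac]; ring⟩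

lemma coprime_X_pow {q : ℂ[X]} (hq : q.coeff 0 ≠ 0) (k : ℕ) :
    IsCoprime ((X : ℂ[X]) ^ k) q := by
  refine IsCoprime.pow_left ?_
  refine ⟨-(Polynomial.C (q.coeff 0)⁻¹ * q.divX), Polynomial.C (q.coeff 0)⁻¹, ?_⟩
  have h : X * q.divX + Polynomial.C (q.coeff 0) = q := Polynomial.X_mul_divX_add q
  have h2 : q - X * q.divX = Polynomial.C (q.coeff 0) := by linear_combination -h
  calc -(Polynomial.C (q.coeff 0)⁻¹ * q.divX) * X + Polynomial.C (q.coeff 0)⁻¹ * q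
      = Polynomial.C (q.coeff 0)⁻¹ * (q - X * q.divX) := by ring
    _ = Polynomial.C (q.coeff 0)⁻¹ * Polynomial.C (q.coeff 0) := by rw [h2]
    _ = 1 := by rw [← Polynomial.C_mul, inv_mul_cancel₀ hq, Polynomial.C_1]

lemma aeval_pow_smul (N : V →ₗ[ℂ] V) (k : ℕ) (v : V) :
    (X : ℂ[X]) ^ k • (Module.AEval'.of N v) = Module.AEval'.of N ((N ^ k) v) := by
  induction k with
  | zero => simp
  | succ k ih =>
      rw [pow_succ', mul_smul, ih, Module.AEval'.X_smul_of, comm_pow, pow_succ]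
      rfl

end PartII

theorem stmt14 {V : Type*} [AddCommGroup V] [Module ℂ V] [FiniteDimensional ℂ V]
    (N T : V →ₗ[ℂ] V) (hN : IsNilpotent N) (hT : Col N T) :
    ∀ x : V, ∃ B : V →ₗ[ℂ] V, B ∘ₗ N = N ∘ₗ B ∧ T x = B x := by
  classical
  intro x
  obtain ⟨m, hm⟩ := hN
  -- every element of the polynomial module is killed by X^m
  have hsm : ∀ z : Module.AEval' N, (X : ℂ[X]) ^ m • z = 0 := by
    intro z
    obtain ⟨v, rfl⟩ := (Module.AEval'.of N).surjective z
    rw [aeval_pow_smul, hm]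
    simp
  have htors : Module.IsTorsion ℂ[X] (Module.AEval' N) := by
    intro z
    exact ⟨⟨X ^ m, mem_nonZeroDivisors_of_ne_zero (pow_ne_zero _ Polynomial.X_ne_zero)⟩, hsm z⟩
  obtain ⟨ι, hfin, p, hirr, e, ⟨eqv⟩⟩ := Module.equiv_directSum_of_isTorsion htors
  -- replace the primes by X
  have hXm0 : ∀ w : (⨁ i : ι, ℂ[X] ⧸ (ℂ[X] ∙ p i ^ e i)), (X : ℂ[X]) ^ m • w = 0 := by
    intro w
    obtain ⟨z, rfl⟩ := eqv.surjective w
    rw [← map_smul, hsm, map_zero]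
  have hspan : ∀ i, (ℂ[X] ∙ p i ^ e i) = (ℂ[X] ∙ (X : ℂ[X]) ^ e i) := by
    intro i
    by_cases he : e i = 0
    · rw [he]; simp
    · have h1 : (Submodule.Quotient.mk ((X : ℂ[X]) ^ m) :
          ℂ[X] ⧸ (ℂ[X] ∙ p i ^ e i)) = 0 := by
        have h0 := hXm0 (DirectSum.lof ℂ[X] ι (fun j => ℂ[X] ⧸ (ℂ[X] ∙ p j ^ e j)) i
          (Submodule.Quotient.mk 1))
        rw [← map_smul] at h0
        have h2 := congrArg (DirectSum.component ℂ[X] ι _ i) h0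
        rw [DirectSum.component.lof_self, map_zero] at h2
        rw [← Submodule.Quotient.mk_smul, smul_eq_mul, mul_one] at h2
        exact h2
      rw [Submodule.Quotient.mk_eq_zero] at h1
      obtain ⟨c, hc⟩ := Submodule.mem_span_singleton.mp h1
      have hdvd : p i ∣ (X : ℂ[X]) ^ m :=
        dvd_trans (dvd_pow_self _ he) ⟨c, by rw [← hc, smul_eq_mul]; ring⟩
      have hprime : Prime (p i) := (hirr i).prime
      have hdvdX : p i ∣ (X : ℂ[X]) := hprime.dvd_of_dvd_pow hdvd
      have hassoc : Associated (p i) (X : ℂ[X]) :=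
        Irreducible.associated_of_dvd (hirr i) Polynomial.irreducible_X hdvdX
      exact Ideal.span_singleton_eq_span_singleton.mpr (hassoc.pow_pow)
  let eqv2 : Module.AEval' N ≃ₗ[ℂ[X]] ⨁ i : ι, ℂ[X] ⧸ (ℂ[X] ∙ (X : ℂ[X]) ^ e i) :=
    eqv.trans (DFinsupp.mapRange.linearEquiv fun i =>
      Submodule.quotEquivOfEq _ _ (hspan i))
  let oeq : V ≃ₗ[ℂ] (⨁ i : ι, ℂ[X] ⧸ (ℂ[X] ∙ (X : ℂ[X]) ^ e i)) :=
    (Module.AEval'.of N).trans (eqv2.restrictScalars ℂ)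
  have hkey : ∀ (k : ℕ) (v : V), oeq ((N ^ k) v) = (X : ℂ[X]) ^ k • oeq v := by
    intro k v
    show eqv2 (Module.AEval'.of N ((N ^ k) v)) = (X : ℂ[X]) ^ k • eqv2 (Module.AEval'.of N v)
    rw [← aeval_pow_smul, map_smul]
  have hkey' : ∀ (k : ℕ) w, oeq.symm ((X : ℂ[X]) ^ k • w) = (N ^ k) (oeq.symm w) := by
    intro k w
    apply oeq.injective
    rw [hkey, oeq.apply_symm_apply, oeq.apply_symm_apply]
  set ξ := oeq x with hξdef
  -- choose polynomial representatives
  have hlift : ∀ i : ι, ∃ pol : ℂ[X],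
      (Submodule.Quotient.mk pol : ℂ[X] ⧸ (ℂ[X] ∙ (X : ℂ[X]) ^ e i)) = ξ i ∧
      (ξ i ≠ 0 → pol ≠ 0) := by
    intro i
    obtain ⟨pol, hpol⟩ := Submodule.Quotient.mk_surjective _ (ξ i)
    exact ⟨pol, hpol, fun h h0 => h (by rw [← hpol, h0]; simp)⟩
  choose pol hpol hpol0 using hlift
  have hdata : ∀ i : ι, ∃ (s : ℕ) (q : ℂ[X]), ξ i ≠ 0 →
      (q.coeff 0 ≠ 0 ∧ pol i = X ^ s * q ∧ s ≤ e i) := by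
    intro i
    by_cases h0 : ξ i = 0
    · exact ⟨0, 1, fun h => absurd h0 h⟩
    · obtain ⟨s, q, hq, hfac⟩ := poly_factor ((pol i).natDegree) (pol i) le_rfl (hpol0 i h0)
      refine ⟨s, q, fun _ => ⟨hq, hfac, ?_⟩⟩
      by_contra hse
      push_neg at hse
      apply h0
      rw [← hpol i]
      have hfac2 : pol i = (X ^ (s - e i) * q) * X ^ (e i) := by
        have hs : s - e i + e i = s := Nat.sub_add_cancel hse.le
        rw [hfac, mul_assoc, mul_comm (q : ℂ[X]) (X ^ e i : ℂ[X]), ← mul_assoc, ← pow_add, hs]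
      rw [hfac2, Submodule.Quotient.mk_eq_zero]
      exact Submodule.mem_span_singleton.mpr ⟨X ^ (s - e i) * q, by rw [smul_eq_mul]⟩
  choose s q hdq using hdata
  -- the hyperinvariant-like subspace associated with x
  set P : ι → Submodule ℂ V := fun i =>
    if ξ i = 0 then ⊥ else
      (LinearMap.range (N ^ s i) ⊓ LinearMap.ker (N ^ (e i - s i))) with hPdef
  set H : Submodule ℂ V := ⨆ i, P i with hHdef
  have hterm : ∀ i : ι,
      oeq.symm (DirectSum.lof ℂ[X] ι (fun j => ℂ[X] ⧸ (ℂ[X] ∙ (X : ℂ[X]) ^ e j)) i (ξ i)) ∈ P i := by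
    intro i
    by_cases h0 : ξ i = 0
    · rw [h0, map_zero, map_zero]
      exact Submodule.zero_mem _
    · obtain ⟨hq0, hfac, hse⟩ := hdq i h0
      rw [hPdef]
      simp only [if_neg h0]
      have hmk : ξ i = (X : ℂ[X]) ^ (s i) •
          (Submodule.Quotient.mk (q i) : ℂ[X] ⧸ (ℂ[X] ∙ (X : ℂ[X]) ^ e i)) := by
        rw [← Submodule.Quotient.mk_smul, smul_eq_mul, ← hfac, hpol i]
      refine Submodule.mem_inf.mpr ⟨?_, ?_⟩
      · rw [hmk, map_smul, hkey']
        exact LinearMap.mem_range_self _ _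
      · rw [LinearMap.mem_ker, ← hkey', ← map_smul]
        have hz : (X : ℂ[X]) ^ (e i - s i) • ξ i = 0 := by
          rw [hmk, smul_smul, ← pow_add, Nat.sub_add_cancel hse, ← Submodule.Quotient.mk_smul,
            smul_eq_mul, Submodule.Quotient.mk_eq_zero]
          exact Submodule.mem_span_singleton.mpr ⟨q i, by rw [smul_eq_mul]; ring⟩
        rw [hz, map_zero, map_zero]
  have hsumξ : (∑ i : ι, DirectSum.lof ℂ[X] ι
      (fun j => ℂ[X] ⧸ (ℂ[X] ∙ (X : ℂ[X]) ^ e j)) i (ξ i)) = ξ := by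
    calc (∑ i : ι, DirectSum.lof ℂ[X] ι
        (fun j => ℂ[X] ⧸ (ℂ[X] ∙ (X : ℂ[X]) ^ e j)) i (ξ i))
        = ∑ i : ι, DirectSum.of (fun j => ℂ[X] ⧸ (ℂ[X] ∙ (X : ℂ[X]) ^ e j)) i (ξ i) :=
          Finset.sum_congr rfl fun i _ => by rw [DirectSum.lof_eq_of]
      _ = ξ := DirectSum.sum_univ_of ξ
  have hxH : x ∈ H := by
    have hx : x = ∑ i : ι, oeq.symm
        (DirectSum.lof ℂ[X] ι (fun j => ℂ[X] ⧸ (ℂ[X] ∙ (X : ℂ[X]) ^ e j)) i (ξ i)) := by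
      rw [← map_sum, hsumξ, hξdef, oeq.symm_apply_apply]
    rw [hx]
    exact Submodule.sum_mem _ fun i _ => (le_iSup P i) (hterm i)
  -- T fixes H
  have hPT : ∀ i : ι, (P i).map T = P i := by
    intro i
    by_cases h0 : ξ i = 0
    · rw [hPdef]; simp only [if_pos h0]; exact Submodule.map_bot T
    · rw [hPdef]; simp only [if_neg h0]
      rw [mapT_inf hT, mapT_range_pow hm hT, mapT_ker_pow hm hT]
  have hTH : H.map T = H := by
    rw [hHdef, Submodule.map_iSup]
    exact iSup_congr hPT
  have hTxH : T x ∈ ⨆ i, P i := by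
    rw [← hHdef, ← hTH]
    exact Submodule.mem_map_of_mem hxH
  obtain ⟨f, hf, hfsum⟩ := (Submodule.mem_iSup_iff_exists_finsupp P (T x)).mp hTxH
  have hfsum' : ∑ i : ι, f i = T x := by
    rw [← hfsum]
    exact (Finsupp.sum_fintype f (fun _ v => v) fun i => rfl).symm
  -- solve for the generators
  have hω : ∀ i : ι, ∃ w : (⨁ j : ι, ℂ[X] ⧸ (ℂ[X] ∙ (X : ℂ[X]) ^ e j)),
      ((X : ℂ[X]) ^ e i) • w = 0 ∧ (pol i) • w = oeq (f i) := by
    intro i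
    by_cases h0 : ξ i = 0
    · have hfi : f i = 0 := by
        have h1 := hf i
        rw [hPdef] at h1
        simp only [if_pos h0] at h1
        simpa using h1
      exact ⟨0, by rw [smul_zero], by rw [hfi, map_zero, smul_zero]⟩
    · obtain ⟨hq0, hfac, hse⟩ := hdq i h0
      have h1 := hf i
      rw [hPdef] at h1
      simp only [if_neg h0] at h1
      obtain ⟨h1r, h1k⟩ := Submodule.mem_inf.mp h1
      obtain ⟨u, hu⟩ := LinearMap.mem_range.mp h1r
      obtain ⟨a, b, hab⟩ := coprime_X_pow hq0 (e i)
      set υ := oeq u with hυ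
      have hζ : oeq (f i) = (X : ℂ[X]) ^ (s i) • υ := by rw [← hu, hkey]
      have hXe : (X : ℂ[X]) ^ (e i) • υ = 0 := by
        have h2 : (X : ℂ[X]) ^ (e i - s i) • oeq (f i) = 0 := by
          rw [← hkey, LinearMap.mem_ker.mp h1k, map_zero]
        calc (X : ℂ[X]) ^ (e i) • υ
            = (X : ℂ[X]) ^ (e i - s i) • ((X : ℂ[X]) ^ (s i) • υ) := by
              rw [smul_smul, ← pow_add, Nat.sub_add_cancel hse]
          _ = 0 := by rw [← hζ, h2]
      refine ⟨b • υ, ?_, ?_⟩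
      · rw [smul_smul, mul_comm, ← smul_smul, hXe, smul_zero]
      · have hqb : q i * b = 1 - a * X ^ e i := by linear_combination hab
        rw [hfac, hζ]
        calc (X ^ s i * q i) • (b • υ) = (X : ℂ[X]) ^ s i • ((q i * b) • υ) := by
              rw [smul_smul, smul_smul]; ring_nf
          _ = (X : ℂ[X]) ^ s i • (υ - a • ((X : ℂ[X]) ^ e i • υ)) := by
              rw [hqb]; exact congrArg (fun w => (X : ℂ[X]) ^ s i • w) ((sub_smul _ _ _).trans (congrArg₂ (· - ·) (one_smul _ υ) (mul_smul a _ υ)))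
          _ = (X : ℂ[X]) ^ s i • υ := by rw [hXe, smul_zero, sub_zero]
  choose ω hω1 hω2 using hω
  let g : ∀ i : ι, (ℂ[X] ⧸ (ℂ[X] ∙ (X : ℂ[X]) ^ e i)) →ₗ[ℂ[X]]
      (⨁ j : ι, ℂ[X] ⧸ (ℂ[X] ∙ (X : ℂ[X]) ^ e j)) := fun i =>
    Submodule.liftQ _ (LinearMap.toSpanSingleton ℂ[X] _ (ω i))
      (by
        rw [Submodule.span_singleton_le_iff_mem, LinearMap.mem_ker,
          LinearMap.toSpanSingleton_apply]
        exact hω1 i)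
  let B : V →ₗ[ℂ] V :=
    (oeq.symm.toLinearMap.comp
      (((DirectSum.toModule ℂ[X] ι _ g).restrictScalars ℂ).comp oeq.toLinearMap))
  have hBapp : ∀ v : V, B v = oeq.symm (DirectSum.toModule ℂ[X] ι _ g (oeq v)) :=
    fun v => rfl
  refine ⟨B, ?_, ?_⟩
  · ext v
    simp only [LinearMap.comp_apply]
    rw [hBapp, hBapp]
    have h1 : oeq (N v) = (X : ℂ[X]) • oeq v := by
      have h2 := hkey 1 v
      rwa [pow_one, pow_one] at h2
    rw [h1, map_smul]
    have h2 := hkey' 1 (DirectSum.toModule ℂ[X] ι _ g (oeq v))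
    rwa [pow_one, pow_one] at h2
  · have hB'ξ : DirectSum.toModule ℂ[X] ι _ g ξ = oeq (T x) := by
      rw [← hsumξ, map_sum]
      have hterm2 : ∀ i : ι, DirectSum.toModule ℂ[X] ι _ g
          (DirectSum.lof ℂ[X] ι (fun j => ℂ[X] ⧸ (ℂ[X] ∙ (X : ℂ[X]) ^ e j)) i (ξ i))
          = oeq (f i) := by
        intro i
        rw [DirectSum.toModule_lof, ← hpol i, Submodule.liftQ_apply,
          LinearMap.toSpanSingleton_apply]
        exact hω2 i
      rw [Finset.sum_congr rfl fun i _ => hterm2 i, ← map_sum, hfsum']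
    calc T x = oeq.symm (oeq (T x)) := (oeq.symm_apply_apply _).symm
      _ = oeq.symm (DirectSum.toModule ℂ[X] ι _ g ξ) := by rw [hB'ξ]
      _ = B x := by rw [hBapp, hξdef]
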